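/- For any subsets X, Y of A*, the lower cones satisfy (XY)^∇ = X^∇ · Y^∇, and if X and Y are non-empty the upper cones satisfy (XY)^Δ = X^Δ · Y^Δ, where X^Δ = ⋂_{x∈X} ↑x and X^∇ = ⋂_{x∈X} ↓x. -/

import Mathlib

/-- The Higman (subword) ordering on words over an ordered alphabet `A`. -/
def Hig {A : Type*} [PartialOrder A] (u v : List A) : Prop :=
  List.SublistForall₂ (· ≤ ·) u v

/-- Elementwise concatenation of languages. -/
def conc {A : Type*} (X Y : Set (List A)) : Set (List A) :=
  Set.image2 (· ++ ·) X Y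

/-- A final segment (upward closed set) of `A*` for the Higman ordering. -/
def IsFinal {A : Type*} [PartialOrder A] (F : Set (List A)) : Prop :=
  ∀ ⦃a b : List A⦄, Hig a b → a ∈ F → b ∈ F

/-- Upward closure of a set of words. -/
def upset {A : Type*} [PartialOrder A] (X : Set (List A)) : Set (List A) :=
  {b | ∃ a ∈ X, Hig a b}

/-- The set of minimal elements of a set of words. -/
def minSet {A : Type*} [PartialOrder A] (X : Set (List A)) : Set (List A) :=
  {x | x ∈ X ∧ ∀ y ∈ X, Hig y x → y = x}

/-- An antichain of words for the Higman ordering. -/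
def IsAnti {A : Type*} [PartialOrder A] (U : Set (List A)) : Prop :=
  ∀ x ∈ U, ∀ y ∈ U, x ≠ y → ¬ Hig x y

/-- The upper cone of a set `X`: words above every element of `X`. -/
def upCone {A : Type*} [PartialOrder A] (X : Set (List A)) : Set (List A) :=
  {w | ∀ x ∈ X, Hig x w}

/-- The lower cone of a set `X`: words below every element of `X`. -/
def downCone {A : Type*} [PartialOrder A] (X : Set (List A)) : Set (List A) :=
  {w | ∀ x ∈ X, Hig w x}

open List

section Helpers
variable {A : Type*} [PartialOrder A]

lemma hig_trans' {a b c : List A} (h1 : List.SublistForall₂ (· ≤ ·) a b)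
    (h2 : List.SublistForall₂ (· ≤ ·) b c) : List.SublistForall₂ (· ≤ ·) a c :=
  IsTrans.trans _ _ _ h1 h2

lemma hig_append' {u v x y : List A} (h1 : List.SublistForall₂ (· ≤ ·) u x)
    (h2 : List.SublistForall₂ (· ≤ ·) v y) :
    List.SublistForall₂ (· ≤ ·) (u ++ v) (x ++ y) := by
  rw [List.sublistForall₂_iff] at h1 h2 ⊢
  obtain ⟨l1, hf1, hs1⟩ := h1
  obtain ⟨l2, hf2, hs2⟩ := h2
  exact ⟨l1 ++ l2, List.rel_append hf1 hf2, hs1.append hs2⟩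

lemma hig_split_right' {w x y : List A} (h : List.SublistForall₂ (· ≤ ·) w (x ++ y)) :
    ∃ k ≤ w.length, List.SublistForall₂ (· ≤ ·) (w.take k) x ∧
      List.SublistForall₂ (· ≤ ·) (w.drop k) y := by
  rw [List.sublistForall₂_iff] at h
  obtain ⟨l, hf, hs⟩ := h
  rw [List.sublist_append_iff] at hs
  obtain ⟨a, b, rfl, ha, hb⟩ := hs
  refine ⟨a.length, ?_, ?_, ?_⟩
  · rw [hf.length_eq, List.length_append]; omega
  · exact List.sublistForall₂_iff.2 ⟨a, List.forall₂_take_append w a b hf, ha⟩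
  · exact List.sublistForall₂_iff.2 ⟨b, List.forall₂_drop_append w a b hf, hb⟩

lemma hig_split_left' {w x y : List A} (h : List.SublistForall₂ (· ≤ ·) (x ++ y) w) :
    ∃ k ≤ w.length, List.SublistForall₂ (· ≤ ·) x (w.take k) ∧
      List.SublistForall₂ (· ≤ ·) y (w.drop k) := by
  rw [List.sublistForall₂_iff] at h
  obtain ⟨l, hf, hs⟩ := h
  have h1 : List.Forall₂ (· ≤ ·) x (l.take x.length) := by
    have := List.forall₂_take x.length hf
    rwa [List.take_left] at this
  have h2 : List.Forall₂ (· ≤ ·) y (l.drop x.length) := by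
    have := List.forall₂_drop x.length hf
    rwa [List.drop_left] at this
  have hs' : l.take x.length ++ l.drop x.length <+ w := by
    rw [List.take_append_drop]; exact hs
  rw [List.append_sublist_iff] at hs'
  obtain ⟨a, b, hw, ha, hb⟩ := hs'
  refine ⟨a.length, ?_, ?_, ?_⟩
  · rw [hw, List.length_append]; omega
  · rw [hw, List.take_left]
    exact List.sublistForall₂_iff.2 ⟨_, h1, ha⟩
  · rw [hw, List.drop_left]
    exact List.sublistForall₂_iff.2 ⟨_, h2, hb⟩

lemma take_hig' {k k' : ℕ} (w : List A) (h : k ≤ k') :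
    List.SublistForall₂ (· ≤ ·) (w.take k) (w.take k') :=
  ((List.take_prefix_take_left h).sublist).sublistForall₂

lemma drop_hig' {k k' : ℕ} (w : List A) (h : k ≤ k') :
    List.SublistForall₂ (· ≤ ·) (w.drop k') (w.drop k) := by
  rw [← Nat.add_sub_cancel' h, ← List.drop_drop]
  exact (List.drop_sublist _ _).sublistForall₂

end Helpers

theorem stmt16 {A : Type*} [PartialOrder A] (X Y : Set (List A)) :
    downCone (conc X Y) = conc (downCone X) (downCone Y) ∧
    (X.Nonempty → Y.Nonempty → upCone (conc X Y) = conc (upCone X) (upCone Y)) := by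

  have memconc : ∀ (U V : Set (List A)) (w : List A),
      w ∈ conc U V ↔ ∃ u ∈ U, ∃ v ∈ V, u ++ v = w := by
    intro U V w; exact Set.mem_image2
  constructor
  · ext w
    rw [memconc]
    constructor
    · intro hw
      simp only [downCone, Set.mem_setOf_eq] at hw ⊢
      rcases Set.eq_empty_or_nonempty X with rfl | hX
      · exact ⟨w, by simp, [], fun y hy => List.SublistForall₂.nil, by simp⟩
      rcases Set.eq_empty_or_nonempty Y with rfl | hY
      · exact ⟨[], fun x hx => List.SublistForall₂.nil, w, by simp, by simp⟩
      have hw' : ∀ x ∈ X, ∀ y ∈ Y, Hig w (x ++ y) := by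
        intro x hx y hy
        exact hw (x ++ y) ((memconc X Y (x ++ y)).2 ⟨x, hx, y, hy, rfl⟩)
      set S : Set ℕ := {k | k ≤ w.length ∧ ∀ x ∈ X, Hig (w.take k) x} with hS
      have hSne : S.Nonempty := ⟨0, Nat.zero_le _, fun x _ => by
        simpa [Hig] using (List.SublistForall₂.nil : List.SublistForall₂ (· ≤ ·) [] x)⟩
      have hSbdd : BddAbove S := ⟨w.length, fun k hk => hk.1⟩
      have hk₀ : sSup S ∈ S := Nat.sSup_mem hSne hSbdd
      refine ⟨w.take (sSup S), hk₀.2, w.drop (sSup S), ?_, List.take_append_drop _ _⟩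
      intro y hy
      set T : Set ℕ := {k | Hig (w.drop k) y} with hT
      have hTne : T.Nonempty := ⟨w.length, by
        simp only [hT, Set.mem_setOf_eq, List.drop_length]
        exact List.SublistForall₂.nil⟩
      have hn : sInf T ∈ T := Nat.sInf_mem hTne
      have hnS : sInf T ∈ S := by
        refine ⟨Nat.sInf_le (show w.length ∈ T by
          simp only [hT, Set.mem_setOf_eq, List.drop_length]
          exact List.SublistForall₂.nil), ?_⟩
        · intro x hx
          obtain ⟨k, hk, h1, h2⟩ := hig_split_right' (hw' x hx y hy)
          have : sInf T ≤ k := Nat.sInf_le h2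
          exact hig_trans' (take_hig' w this) h1
      have hle : sInf T ≤ sSup S := le_csSup hSbdd hnS
      exact hig_trans' (drop_hig' w hle) hn
    · rintro ⟨u, hu, v, hv, rfl⟩
      intro z hz
      obtain ⟨x, hx, y, hy, rfl⟩ := (memconc X Y z).1 hz
      exact hig_append' (hu x hx) (hv y hy)
  · intro hX hY
    ext w
    rw [memconc]
    constructor
    · intro hw
      simp only [upCone, Set.mem_setOf_eq] at hw ⊢
      have hw' : ∀ x ∈ X, ∀ y ∈ Y, Hig (x ++ y) w := by
        intro x hx y hy
        exact hw (x ++ y) ((memconc X Y (x ++ y)).2 ⟨x, hx, y, hy, rfl⟩)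
      obtain ⟨y₀, hy₀⟩ := hY
      obtain ⟨x₀, hx₀⟩ := hX
      set S : Set ℕ := {k | ∀ x ∈ X, Hig x (w.take k)} with hS
      have hSne : S.Nonempty := ⟨w.length, fun x hx => by
        rw [List.take_length]
        exact hig_trans' ((List.sublist_append_left x y₀).sublistForall₂) (hw' x hx y₀ hy₀)⟩
      have hk₀ : sInf S ∈ S := Nat.sInf_mem hSne
      refine ⟨w.take (sInf S), hk₀, w.drop (sInf S), ?_, List.take_append_drop _ _⟩
      intro y hy
      set T : Set ℕ := {k | k ≤ w.length ∧ Hig y (w.drop k)} with hT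
      have hTne : T.Nonempty := by
        obtain ⟨k, hk, _, h2⟩ := hig_split_left' (hw' x₀ hx₀ y hy)
        exact ⟨k, hk, h2⟩
      have hTbdd : BddAbove T := ⟨w.length, fun k hk => hk.1⟩
      have hn : sSup T ∈ T := Nat.sSup_mem hTne hTbdd
      have hnS : sSup T ∈ S := by
        intro x hx
        obtain ⟨k, hk, h1, h2⟩ := hig_split_left' (hw' x hx y hy)
        have : k ≤ sSup T := le_csSup hTbdd ⟨hk, h2⟩
        exact hig_trans' h1 (take_hig' w this)
      have hle : sInf S ≤ sSup T := Nat.sInf_le hnS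
      exact hig_trans' hn.2 (drop_hig' w hle)
    · rintro ⟨u, hu, v, hv, rfl⟩
      intro z hz
      obtain ⟨x, hx, y, hy, rfl⟩ := (memconc X Y z).1 hz
      exact hig_append' (hu x hx) (hv y hy)
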